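/- arXiv:2108.04782 — 4 statements merged into one kernel-verified Lean document; each statement's English description precedes it below -/
import Mathlib

section
/- A random variable X taking values in the bounded interval [a, b] almost surely and having mean zero is (b−a)/2-subgaussian. -/
open MeasureTheory Real

/-- `X` is `σ`-subgaussian: for all `λ`, `E[exp(λ X)] ≤ exp(λ² σ² / 2)`. -/
def IsSubgaussian {Ω : Type*} [MeasurableSpace Ω] (μ : Measure Ω) (X : Ω → ℝ) (σ : ℝ) : Prop :=
  ∀ l : ℝ, Integrable (fun ω => Real.exp (l * X ω)) μ ∧
    ∫ ω, Real.exp (l * X ω) ∂μ ≤ Real.exp (l ^ 2 * σ ^ 2 / 2)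

open Real in
lemma hoeffding_key (p : ℝ) (hp0 : 0 ≤ p) (hp1 : p ≤ 1) (h : ℝ) :
    (1 - p) * Real.exp (-p * h) + p * Real.exp ((1 - p) * h) ≤ Real.exp (h ^ 2 / 8) := by
  set φ : ℝ → ℝ := fun t => 1 - p + p * Real.exp t with hφdef
  have hφpos : ∀ t, 0 < φ t := by
    intro t
    rcases lt_or_eq_of_le hp1 with hlt | heq
    · have : 0 < 1 - p := by linarith
      have : 0 ≤ p * Real.exp t := mul_nonneg hp0 (exp_nonneg t)
      simp only [hφdef]; nlinarith
    · simp only [hφdef, heq]; simpa using exp_pos t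
  -- q t := p * exp t / φ t ∈ [0,1]
  set q : ℝ → ℝ := fun t => p * Real.exp t / φ t with hqdef
  have hq01 : ∀ t, 0 ≤ q t ∧ q t ≤ 1 := by
    intro t
    have h1 : 0 ≤ p * Real.exp t := mul_nonneg hp0 (exp_nonneg t)
    have h2 : p * Real.exp t ≤ φ t := by simp only [hφdef]; nlinarith
    constructor
    · exact div_nonneg h1 (hφpos t).le
    · rw [div_le_one (hφpos t)]; exact h2
  have hφd : ∀ t, HasDerivAt φ (p * Real.exp t) t := by
    intro t
    exact ((Real.hasDerivAt_exp t).const_mul p).const_add (1 - p)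
  -- f t = log (φ t) - p * t ; f' = q - p
  set f : ℝ → ℝ := fun t => Real.log (φ t) - p * t with hfdef
  have hfd : ∀ t, HasDerivAt f (q t - p) t := by
    intro t
    have := ((hφd t).log (hφpos t).ne')
    have h2 := this.sub ((hasDerivAt_id t).const_mul p)
    rw [mul_one] at h2; exact h2
  -- q' = q (1 - q)
  have hqd : ∀ t, HasDerivAt q (q t * (1 - q t)) t := by
    intro t
    have hd := ((Real.hasDerivAt_exp t).const_mul p).div (hφd t) (hφpos t).ne'
    have hiden : ∀ c d : ℝ, d ≠ 0 → (c * d - c * c) / d ^ 2 = c / d * (1 - c / d) := by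
      intro c d hdne; field_simp; try ring; try tauto
    rw [hiden _ _ (hφpos t).ne'] at hd
    exact hd
  have hq0 : q 0 = p := by
    simp [hqdef, hφdef]
  -- H t := t/4 - (q t - p), monotone since H' = 1/4 - q(1-q) ≥ 0
  set H : ℝ → ℝ := fun t => t / 4 - (q t - p) with hHdef
  have hHd : ∀ t, HasDerivAt H (1 / 4 - q t * (1 - q t)) t := by
    intro t
    exact ((hasDerivAt_id t).div_const 4).sub ((hqd t).sub_const p)
  have hHmono : Monotone H := by
    apply monotone_of_deriv_nonneg (fun t => (hHd t).differentiableAt)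
    intro t
    rw [(hHd t).deriv]
    obtain ⟨h1, h2⟩ := hq01 t
    nlinarith [sq_nonneg (q t - 1 / 2)]
  have hH0 : H 0 = 0 := by simp [hHdef, hq0]
  -- K t := t^2/8 - f t ; K' = H
  set K : ℝ → ℝ := fun t => t ^ 2 / 8 - f t with hKdef
  have hKd : ∀ t, HasDerivAt K (H t) t := by
    intro t
    have h1 : HasDerivAt (fun t : ℝ => t ^ 2 / 8) (t / 4) t := by
      refine ((hasDerivAt_pow 2 t).div_const 8).congr_deriv ?_
      push_cast; ring
    have := h1.sub (hfd t)
    exact this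
  have hK0 : K 0 = 0 := by simp [hKdef, hfdef, hφdef]
  have hKnonneg : ∀ t, 0 ≤ K t := by
    intro t
    rcases le_total 0 t with ht | ht
    · have hm : MonotoneOn K (Set.Ici (0 : ℝ)) := by
        apply monotoneOn_of_deriv_nonneg (convex_Ici 0)
          (fun x _ => (hKd x).differentiableAt.continuousAt.continuousWithinAt)
        · intro x _; exact (hKd x).differentiableAt.differentiableWithinAt
        · intro x hx
          rw [(hKd x).deriv]
          rw [interior_Ici] at hx
          calc (0:ℝ) = H 0 := hH0.symm
            _ ≤ H x := hHmono (le_of_lt hx)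
      have := hm (Set.self_mem_Ici) (Set.mem_Ici.mpr ht) ht
      linarith [hK0 ▸ this]
    · have hm : AntitoneOn K (Set.Iic (0 : ℝ)) := by
        apply antitoneOn_of_deriv_nonpos (convex_Iic 0)
          (fun x _ => (hKd x).differentiableAt.continuousAt.continuousWithinAt)
        · intro x _; exact (hKd x).differentiableAt.differentiableWithinAt
        · intro x hx
          rw [(hKd x).deriv]
          rw [interior_Iic] at hx
          calc H x ≤ H 0 := hHmono (le_of_lt hx)
            _ = 0 := hH0
      have := hm (Set.mem_Iic.mpr ht) (Set.self_mem_Iic) ht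
      linarith [hK0 ▸ this]
  -- conclude
  have hf : f h ≤ h ^ 2 / 8 := by have := hKnonneg h; simp only [hKdef] at this; linarith
  have hLHS : (1 - p) * Real.exp (-p * h) + p * Real.exp ((1 - p) * h)
      = Real.exp (f h) := by
    rw [hfdef]
    simp only
    rw [Real.exp_sub, Real.exp_log (hφpos h), hφdef]
    simp only
    rw [eq_div_iff (Real.exp_ne_zero _)]
    have e1 : Real.exp (-p * h) * Real.exp (p * h) = 1 := by
      rw [← Real.exp_add]; ring_nf; exact Real.exp_zero
    have e2 : Real.exp ((1 - p) * h) * Real.exp (p * h) = Real.exp h := by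
      rw [← Real.exp_add]; ring_nf
    linear_combination (1 - p) * e1 + p * e2
  rw [hLHS]
  exact Real.exp_le_exp.mpr hf

/-- A mean-zero random variable bounded in `[a, b]` is `(b - a)/2`-subgaussian. -/
theorem bounded_mean_zero_subgaussian {Ω : Type*} [MeasurableSpace Ω]
    (μ : Measure Ω) [IsProbabilityMeasure μ] (X : Ω → ℝ) (a b : ℝ)
    (hX : Measurable X)
    (hbdd : ∀ᵐ ω ∂μ, a ≤ X ω ∧ X ω ≤ b)
    (hmean : ∫ ω, X ω ∂μ = 0) :
    IsSubgaussian μ X ((b - a) / 2) := by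
  have hμ : μ ≠ 0 := IsProbabilityMeasure.ne_zero μ
  have hab : a ≤ b := by
    obtain ⟨ω, hω⟩ := hbdd.exists
    exact hω.1.trans hω.2
  rcases eq_or_lt_of_le hab with heq | hlt
  · -- degenerate case a = b : X = a a.e. and a = 0
    have hXa : ∀ᵐ ω ∂μ, X ω = a := by
      filter_upwards [hbdd] with ω hω
      exact le_antisymm (heq ▸ hω.2) hω.1
    have ha0 : a = 0 := by
      have : ∫ ω, X ω ∂μ = ∫ _ω, a ∂μ := integral_congr_ae hXa
      rw [integral_const] at this
      simp [measure_univ] at this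
      rw [hmean] at this; exact this.symm
    intro l
    have h1 : ∀ᵐ ω ∂μ, Real.exp (l * X ω) = 1 := by
      filter_upwards [hXa] with ω hω
      simp [hω, ha0]
    constructor
    · exact (integrable_const 1).congr (h1.mono fun ω h => h.symm)
    · rw [integral_congr_ae h1, integral_const]
      simp [measure_univ, ← heq, ha0]
  · -- main case a < b
    have hba : (0:ℝ) < b - a := by linarith
    have hXint : Integrable X μ := by
      refine (integrable_const (max |a| |b|)).mono' hX.aestronglyMeasurable ?_
      filter_upwards [hbdd] with ω hω
      rw [Real.norm_eq_abs]
      exact abs_le_max_abs_abs hω.1 hω.2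
    have ha0 : a ≤ 0 := by
      have h1 : ∫ _ω, a ∂μ ≤ ∫ ω, X ω ∂μ :=
        integral_mono_ae (integrable_const a) hXint (hbdd.mono fun ω h => h.1)
      rw [hmean, integral_const] at h1
      simpa [measure_univ] using h1
    have hb0 : 0 ≤ b := by
      have h1 : ∫ ω, X ω ∂μ ≤ ∫ _ω, b ∂μ :=
        integral_mono_ae hXint (integrable_const b) (hbdd.mono fun ω h => h.2)
      rw [hmean, integral_const] at h1
      simpa [measure_univ] using h1
    intro l
    set c1 : ℝ := Real.exp (l * a) / (b - a) with hc1
    set c2 : ℝ := Real.exp (l * b) / (b - a) with hc2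
    set g : Ω → ℝ := fun ω => c1 * (b - X ω) + c2 * (X ω - a) with hg
    have hexp_int : Integrable (fun ω => Real.exp (l * X ω)) μ := by
      refine (integrable_const (Real.exp (|l| * max |a| |b|))).mono'
        ((hX.const_mul l).exp.aestronglyMeasurable) ?_
      filter_upwards [hbdd] with ω hω
      rw [Real.norm_eq_abs, abs_of_pos (Real.exp_pos _), Real.exp_le_exp]
      calc l * X ω ≤ |l * X ω| := le_abs_self _
        _ = |l| * |X ω| := abs_mul l (X ω)
        _ ≤ |l| * max |a| |b| := by
            exact mul_le_mul_of_nonneg_left (abs_le_max_abs_abs hω.1 hω.2) (abs_nonneg l)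
    have hg_int : Integrable g μ :=
      (((integrable_const b).sub hXint).const_mul c1).add
        ((hXint.sub (integrable_const a)).const_mul c2)
    have hconv : ∀ᵐ ω ∂μ, Real.exp (l * X ω) ≤ g ω := by
      filter_upwards [hbdd] with ω hω
      set t1 : ℝ := (b - X ω) / (b - a) with ht1
      set t2 : ℝ := (X ω - a) / (b - a) with ht2
      have ht1n : 0 ≤ t1 := div_nonneg (by linarith [hω.2]) hba.le
      have ht2n : 0 ≤ t2 := div_nonneg (by linarith [hω.1]) hba.le
      have hsum : t1 + t2 = 1 := by
        rw [ht1, ht2, ← add_div, div_eq_one_iff_eq hba.ne']; ring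
      have := convexOn_exp.2 (Set.mem_univ (l * a)) (Set.mem_univ (l * b)) ht1n ht2n hsum
      simp only [smul_eq_mul] at this
      have harg : t1 * (l * a) + t2 * (l * b) = l * X ω := by
        rw [ht1, ht2]; field_simp; try ring; try tauto
      rw [harg] at this
      calc Real.exp (l * X ω) ≤ t1 * Real.exp (l * a) + t2 * Real.exp (l * b) := this
        _ = g ω := by rw [hg]; simp only [hc1, hc2, ht1, ht2]; ring
    have hint_le : ∫ ω, Real.exp (l * X ω) ∂μ ≤ ∫ ω, g ω ∂μ :=
      integral_mono_ae hexp_int hg_int hconv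
    have hgval : ∫ ω, g ω ∂μ = c1 * b + c2 * (-a) := by
      have i1 : Integrable (fun ω => c1 * (b - X ω)) μ := by
        exact ((integrable_const b).sub hXint).const_mul c1
      have i2 : Integrable (fun ω => c2 * (X ω - a)) μ := by
        exact (hXint.sub (integrable_const a)).const_mul c2
      have i3 : Integrable (fun ω => b - X ω) μ := by exact (integrable_const b).sub hXint
      have i4 : Integrable (fun ω => X ω - a) μ := by exact hXint.sub (integrable_const a)
      rw [hg]
      simp only
      rw [integral_add i1 i2, integral_const_mul, integral_const_mul,
        integral_sub (integrable_const b) hXint,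
        integral_sub hXint (integrable_const a),
        integral_const, integral_const, hmean]
      simp [measure_univ]
    -- apply the key analytic lemma
    set p : ℝ := -a / (b - a) with hp
    have hp0 : 0 ≤ p := div_nonneg (by linarith) hba.le
    have hp1 : p ≤ 1 := by
      rw [hp, div_le_one hba]; linarith
    have hkey := hoeffding_key p hp0 hp1 (l * (b - a))
    have he1 : -p * (l * (b - a)) = l * a := by
      rw [hp]; field_simp; try ring; try tauto
    have hq : 1 - p = b / (b - a) := by
      rw [hp]
      rw [eq_div_iff hba.ne']
      field_simp
      ring
    have he2 : (1 - p) * (l * (b - a)) = l * b := by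
      rw [hq]; field_simp; try ring; try tauto
    rw [he1, he2] at hkey
    have hfinal : c1 * b + c2 * (-a) ≤ Real.exp ((l * (b - a)) ^ 2 / 8) := by
      have hb' : c1 * b = (1 - p) * Real.exp (l * a) := by
        rw [hc1, hp]; field_simp; try ring; try tauto
      have ha' : c2 * (-a) = p * Real.exp (l * b) := by
        rw [hc2, hp]; field_simp; try ring; try tauto
      rw [hb', ha']; exact hkey
    have hexp_eq : (l * (b - a)) ^ 2 / 8 = l ^ 2 * ((b - a) / 2) ^ 2 / 2 := by ring
    rw [hgval] at hint_le
    refine ⟨hexp_int, ?_⟩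
    calc ∫ ω, Real.exp (l * X ω) ∂μ ≤ c1 * b + c2 * (-a) := hint_le
      _ ≤ Real.exp ((l * (b - a)) ^ 2 / 8) := hfinal
      _ = Real.exp (l ^ 2 * ((b - a) / 2) ^ 2 / 2) := by rw [hexp_eq]
end

section
/- Bretagnolle–Huber inequality: for any two probability measures P and Q on a common measurable space and any event A, P(A) + Q(Aᶜ) ≥ (1/2)·exp(−KL(P, Q)). -/
open MeasureTheory Real Classical

/-- KL divergence with value `⊤` when `P` is not absolutely continuous w.r.t. `Q`
(or the log-likelihood ratio is not integrable). -/
noncomputable def klDiv' {Ω : Type*} [MeasurableSpace Ω] (P Q : Measure Ω) : ENNReal :=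
  if P ≪ Q ∧ Integrable (fun ω => Real.log (P.rnDeriv Q ω).toReal) P then
    ENNReal.ofReal (∫ ω, Real.log (P.rnDeriv Q ω).toReal ∂P)
  else ⊤

lemma bh_aux (a : ℝ) (ha : 0 ≤ a) :
    Real.exp (-(1/2) * Real.log a) * a = Real.sqrt a := by
  rcases ha.eq_or_lt with h | h
  · simp [← h]
  · have h1 : Real.exp (-(1/2) * Real.log a) * a
        = Real.exp (-(1/2) * Real.log a + Real.log a) := by
      rw [Real.exp_add, Real.exp_log h]
    rw [h1, Real.sqrt_eq_rpow, Real.rpow_def_of_pos h]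
    ring_nf

lemma bh_sqrt_le (a : ℝ) (ha : 0 ≤ a) : Real.sqrt a ≤ 1 + a := by
  nlinarith [Real.sq_sqrt ha, Real.sqrt_nonneg a]

theorem bh_real {Ω : Type*} [MeasurableSpace Ω]
    (P Q : Measure Ω) [IsProbabilityMeasure P] [IsProbabilityMeasure Q]
    (A : Set Ω) (hA : MeasurableSet A) (hac : P ≪ Q)
    (hint : Integrable (fun ω => Real.log (P.rnDeriv Q ω).toReal) P) :
    Real.exp (-(∫ ω, Real.log (P.rnDeriv Q ω).toReal ∂P))
      ≤ 2 * ((P A).toReal + (Q Aᶜ).toReal) := by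
  set f : Ω → ℝ := fun ω => (P.rnDeriv Q ω).toReal with hf_def
  have hf_meas : Measurable f := (Measure.measurable_rnDeriv P Q).ennreal_toReal
  have hf_nonneg : ∀ ω, 0 ≤ f ω := fun ω => ENNReal.toReal_nonneg
  have hf_int : Integrable f Q := Measure.integrable_toReal_rnDeriv
  have hf_integral : ∫ ω, f ω ∂Q = 1 := by
    rw [Measure.integral_toReal_rnDeriv hac]
    simp
  set g : Ω → ℝ := fun ω => -(1/2) * Real.log (f ω) with hg_def
  have hg_int : Integrable g P := hint.const_mul _
  set h : Ω → ℝ := fun ω => Real.exp (g ω) with hh_def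
  have hfh : ∀ ω, f ω * h ω = Real.sqrt (f ω) := by
    intro ω
    rw [mul_comm]
    exact bh_aux (f ω) (hf_nonneg ω)
  have hsqrt_int : Integrable (fun ω => Real.sqrt (f ω)) Q := by
    refine ((integrable_const (1:ℝ)).add hf_int).mono'
      (hf_meas.sqrt.aestronglyMeasurable) ?_
    filter_upwards with ω
    rw [Real.norm_of_nonneg (Real.sqrt_nonneg _)]
    simpa using bh_sqrt_le (f ω) (hf_nonneg ω)
  have hh_int : Integrable h P := by
    rw [← integrable_rnDeriv_smul_iff hac]
    simp only [smul_eq_mul]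
    refine hsqrt_int.congr ?_
    filter_upwards with ω using (hfh ω).symm
  have hh_integral : ∫ ω, h ω ∂P = ∫ ω, Real.sqrt (f ω) ∂Q := by
    rw [← integral_rnDeriv_smul hac (f := h)]
    refine integral_congr_ae ?_
    filter_upwards with ω
    simp only [smul_eq_mul]
    exact hfh ω
  have hjensen : Real.exp (∫ ω, g ω ∂P) ≤ ∫ ω, h ω ∂P := by
    have := convexOn_exp.map_integral_le (μ := P)
      Real.continuous_exp.continuousOn isClosed_univ
      (Filter.Eventually.of_forall fun ω => Set.mem_univ (g ω)) hg_int
      (by exact hh_int)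
    simpa using this
  set S : ℝ := ∫ ω, Real.sqrt (f ω) ∂Q with hS_def
  have hgint_eq : ∫ ω, g ω ∂P = -(1/2) * ∫ ω, Real.log (f ω) ∂P := by
    simp only [hg_def]
    exact integral_const_mul _ _
  have hK : Real.exp (-(∫ ω, Real.log (f ω) ∂P)) = Real.exp (∫ ω, g ω ∂P) ^ 2 := by
    rw [sq, ← Real.exp_add, hgint_eq]
    ring_nf
  have hS_nonneg : 0 ≤ S := integral_nonneg fun ω => Real.sqrt_nonneg _
  have hexpS : Real.exp (-(∫ ω, Real.log (f ω) ∂P)) ≤ S ^ 2 := by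
    rw [hK]
    have := hjensen
    rw [hh_integral] at this
    exact pow_le_pow_left₀ (Real.exp_nonneg _) this 2
  set m : Ω → ℝ := fun ω => min (f ω) 1 with hm_def
  set M : Ω → ℝ := fun ω => max (f ω) 1 with hM_def
  have hm_nonneg : ∀ ω, 0 ≤ m ω := fun ω => le_min (hf_nonneg ω) one_pos.le
  have hM_nonneg : ∀ ω, 0 ≤ M ω := fun ω => le_trans one_pos.le (le_max_right _ _)
  have hm_le_one : ∀ ω, m ω ≤ 1 := fun ω => min_le_right _ _
  have hM_le : ∀ ω, M ω ≤ f ω + 1 := by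
    intro ω
    exact max_le (by linarith [hf_nonneg ω]) (by linarith [hf_nonneg ω])
  have hm_int : Integrable m Q := by
    refine (integrable_const (1:ℝ)).mono'
      ((hf_meas.min measurable_const).aestronglyMeasurable) ?_
    filter_upwards with ω
    rw [Real.norm_of_nonneg (hm_nonneg ω)]
    exact hm_le_one ω
  have hfi1 : Integrable (fun ω => f ω + 1) Q := hf_int.add (integrable_const 1)
  have hM_int : Integrable M Q := by
    refine hfi1.mono' ((hf_meas.max measurable_const).aestronglyMeasurable) ?_
    filter_upwards with ω
    rw [Real.norm_of_nonneg (hM_nonneg ω)]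
    exact hM_le ω
  have hmm : ∀ ω, Real.sqrt (f ω) = Real.sqrt (m ω) * Real.sqrt (M ω) := by
    intro ω
    rw [← Real.sqrt_mul (hm_nonneg ω), min_mul_max, mul_one]
  have hrpow2 : ∀ x : ℝ, 0 ≤ x → Real.sqrt x ^ (2:ℝ) = x := by
    intro x hx
    rw [Real.rpow_two, Real.sq_sqrt hx]
  have hCS : S ≤ (∫ ω, m ω ∂Q) ^ ((1:ℝ)/2) * (∫ ω, M ω ∂Q) ^ ((1:ℝ)/2) := by
    have hconj : Real.HolderConjugate 2 2 := Real.holderConjugate_iff.mpr ⟨one_lt_two, by norm_num⟩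
    have h2 : ENNReal.ofReal (2:ℝ) = 2 := by simp [ENNReal.ofReal_ofNat]
    have hmem_m : MemLp (fun ω => Real.sqrt (m ω)) (ENNReal.ofReal 2) Q := by
      rw [h2]
      refine (memLp_two_iff_integrable_sq
        ((hf_meas.min measurable_const).sqrt.aestronglyMeasurable)).mpr ?_
      refine hm_int.congr ?_
      filter_upwards with ω using (Real.sq_sqrt (hm_nonneg ω)).symm
    have hmem_M : MemLp (fun ω => Real.sqrt (M ω)) (ENNReal.ofReal 2) Q := by
      rw [h2]
      refine (memLp_two_iff_integrable_sq
        ((hf_meas.max measurable_const).sqrt.aestronglyMeasurable)).mpr ?_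
      refine hM_int.congr ?_
      filter_upwards with ω using (Real.sq_sqrt (hM_nonneg ω)).symm
    have := integral_mul_le_Lp_mul_Lq_of_nonneg hconj
      (Filter.Eventually.of_forall fun ω => Real.sqrt_nonneg (m ω))
      (Filter.Eventually.of_forall fun ω => Real.sqrt_nonneg (M ω))
      hmem_m hmem_M
    have heq1 : ∫ ω, Real.sqrt (m ω) * Real.sqrt (M ω) ∂Q = S := by
      rw [hS_def]
      exact integral_congr_ae (Filter.Eventually.of_forall fun ω => (hmm ω).symm)
    have heq2 : ∫ ω, Real.sqrt (m ω) ^ (2:ℝ) ∂Q = ∫ ω, m ω ∂Q :=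
      integral_congr_ae (Filter.Eventually.of_forall fun ω => hrpow2 _ (hm_nonneg ω))
    have heq3 : ∫ ω, Real.sqrt (M ω) ^ (2:ℝ) ∂Q = ∫ ω, M ω ∂Q :=
      integral_congr_ae (Filter.Eventually.of_forall fun ω => hrpow2 _ (hM_nonneg ω))
    rw [heq1, heq2, heq3] at this
    exact this
  have hm_integral_nonneg : 0 ≤ ∫ ω, m ω ∂Q := integral_nonneg hm_nonneg
  have hM_integral_nonneg : 0 ≤ ∫ ω, M ω ∂Q := integral_nonneg hM_nonneg
  have hS2 : S ^ 2 ≤ (∫ ω, m ω ∂Q) * (∫ ω, M ω ∂Q) := by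
    calc S ^ 2 ≤ ((∫ ω, m ω ∂Q) ^ ((1:ℝ)/2) * (∫ ω, M ω ∂Q) ^ ((1:ℝ)/2)) ^ 2 :=
          pow_le_pow_left₀ hS_nonneg hCS 2
    _ = (∫ ω, m ω ∂Q) * (∫ ω, M ω ∂Q) := by
        rw [mul_pow, ← Real.rpow_two, ← Real.rpow_two,
          ← Real.rpow_mul hm_integral_nonneg, ← Real.rpow_mul hM_integral_nonneg]
        norm_num
  have hMle : ∫ ω, M ω ∂Q ≤ 2 := by
    have h1 : ∫ ω, M ω ∂Q ≤ ∫ ω, f ω + 1 ∂Q := integral_mono hM_int hfi1 hM_le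
    rw [integral_add hf_int (integrable_const 1), hf_integral] at h1
    simp only [integral_const, measure_univ, probReal_univ, ENNReal.toReal_one, smul_eq_mul, one_mul] at h1
    linarith
  have hmle : ∫ ω, m ω ∂Q ≤ (P A).toReal + (Q Aᶜ).toReal := by
    have hsplit : ∫ ω, m ω ∂Q = (∫ ω in A, m ω ∂Q) + ∫ ω in Aᶜ, m ω ∂Q :=
      (integral_add_compl hA hm_int).symm
    have h1 : ∫ ω in A, m ω ∂Q ≤ (P A).toReal := by
      rw [← measureReal_def, ← Measure.setIntegral_toReal_rnDeriv hac A]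
      exact setIntegral_mono_on (hm_int.integrableOn) (hf_int.integrableOn) hA
        fun ω _ => min_le_left _ _
    have h2 : ∫ ω in Aᶜ, m ω ∂Q ≤ (Q Aᶜ).toReal := by
      have hle : ∫ ω in Aᶜ, m ω ∂Q ≤ ∫ ω in Aᶜ, (1:ℝ) ∂Q :=
        setIntegral_mono_on (hm_int.integrableOn)
          (integrableOn_const (measure_ne_top Q Aᶜ)) hA.compl
          fun ω _ => min_le_right _ _
      rwa [setIntegral_const, smul_eq_mul, mul_one] at hle
    rw [hsplit]
    exact add_le_add h1 h2
  calc Real.exp (-(∫ ω, Real.log (f ω) ∂P)) ≤ S ^ 2 := hexpS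
    _ ≤ (∫ ω, m ω ∂Q) * (∫ ω, M ω ∂Q) := hS2
    _ ≤ ((P A).toReal + (Q Aᶜ).toReal) * 2 := by
        refine mul_le_mul hmle hMle hM_integral_nonneg ?_
        exact le_trans hm_integral_nonneg hmle
    _ = 2 * ((P A).toReal + (Q Aᶜ).toReal) := mul_comm _ _

/-- Bretagnolle–Huber inequality. -/
theorem bretagnolle_huber {Ω : Type*} [MeasurableSpace Ω]
    (P Q : Measure Ω) [IsProbabilityMeasure P] [IsProbabilityMeasure Q]
    (A : Set Ω) (hA : MeasurableSet A) :
    (if klDiv' P Q = ⊤ then 0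
      else ENNReal.ofReal ((1 / 2) * Real.exp (-(klDiv' P Q).toReal))) ≤ P A + Q Aᶜ := by
  by_cases hKL : klDiv' P Q = ⊤
  · rw [if_pos hKL]
    exact zero_le
  · rw [if_neg hKL]
    have hcond : P ≪ Q ∧ Integrable (fun ω => Real.log (P.rnDeriv Q ω).toReal) P := by
      by_contra hc
      apply hKL
      unfold klDiv'
      rw [if_neg hc]
    obtain ⟨hac, hint⟩ := hcond
    have hklEq : klDiv' P Q
        = ENNReal.ofReal (∫ ω, Real.log (P.rnDeriv Q ω).toReal ∂P) := by
      unfold klDiv'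
      rw [if_pos ⟨hac, hint⟩]
    set K := ∫ ω, Real.log (P.rnDeriv Q ω).toReal ∂P with hK_def
    have hKle : K ≤ (klDiv' P Q).toReal := by
      rw [hklEq]
      rcases le_total K 0 with h | h
      · exact le_trans h ENNReal.toReal_nonneg
      · rw [ENNReal.toReal_ofReal h]
    have hmain := bh_real P Q A hA hac hint
    have hexp : Real.exp (-(klDiv' P Q).toReal) ≤ Real.exp (-K) :=
      Real.exp_le_exp.mpr (by linarith)
    have h1 : (1/2 : ℝ) * Real.exp (-(klDiv' P Q).toReal)
        ≤ (P A).toReal + (Q Aᶜ).toReal := by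
      rw [← hK_def] at hmain
      linarith
    calc ENNReal.ofReal ((1/2) * Real.exp (-(klDiv' P Q).toReal))
        ≤ ENNReal.ofReal ((P A).toReal + (Q Aᶜ).toReal) := ENNReal.ofReal_le_ofReal h1
      _ = P A + Q Aᶜ := by
          rw [ENNReal.ofReal_add ENNReal.toReal_nonneg ENNReal.toReal_nonneg,
            ENNReal.ofReal_toReal (measure_ne_top _ _),
            ENNReal.ofReal_toReal (measure_ne_top _ _)]
end

section
/- For the exponential-weights potential: if Ŝ_{T,a} = ∑_{t≤T} R̂_{t,a} with R̂_{t,a} ≤ 1 for all t, a, P_{t,a} = exp(η Ŝ_{t−1,a})/∑_{a'} exp(η Ŝ_{t−1,a'}), and η > 0, then for every action a, Ŝ_{T,a} − ∑_{t=1}^T ∑_{a'} P_{t,a'} R̂_{t,a'} ≤ log(K)/η + η ∑_{t=1}^T ∑_{a'} P_{t,a'} R̂_{t,a'}². -/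
open Finset

lemma exp_le_one_add_add_sq {x : ℝ} (hx : x ≤ 1) :
    Real.exp x ≤ 1 + x + x ^ 2 := by
  rcases le_or_gt x 0 with h | h
  · have h1 : (0:ℝ) < 1 - x := by linarith
    have e1 : Real.exp x * (1 - x) ≤ 1 := by
      calc Real.exp x * (1 - x) ≤ Real.exp x * Real.exp (-x) := by
            apply mul_le_mul_of_nonneg_left _ (Real.exp_pos x).le
            linarith [Real.add_one_le_exp (-x)]
        _ = 1 := by rw [← Real.exp_add]; simp
    have e2 : (1:ℝ) ≤ (1 + x + x ^ 2) * (1 - x) := by nlinarith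
    have := e1.trans e2
    exact le_of_mul_le_mul_right this h1
  · have hb := Real.exp_bound' h.le hx (n := 2) (by norm_num)
    have hs : (∑ m ∈ Finset.range 2, x ^ m / m.factorial) = 1 + x := by
      norm_num [Finset.sum_range_succ]
    rw [hs] at hb
    norm_num [Nat.factorial] at hb
    nlinarith [sq_nonneg x]

/-- Key deterministic potential inequality in the EXP3 regret proof. -/
theorem exp3_potential_inequality (K T : ℕ) (hK : 1 ≤ K) (η : ℝ) (hη : 0 < η)
    (Rhat : ℕ → Fin K → ℝ) (hR : ∀ t a, η * Rhat t a ≤ 1)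
    (S : ℕ → Fin K → ℝ) (hS : ∀ t a, S t a = ∑ s ∈ Finset.range t, Rhat s a)
    (P : ℕ → Fin K → ℝ)
    (hP : ∀ t a, P t a = Real.exp (η * S t a) / ∑ a', Real.exp (η * S t a')) :
    ∀ a : Fin K,
      S T a - ∑ t ∈ Finset.range T, ∑ a', P t a' * Rhat t a'
        ≤ Real.log K / η + η * ∑ t ∈ Finset.range T, ∑ a', P t a' * (Rhat t a') ^ 2 := by
  intro a
  have hne : (Finset.univ : Finset (Fin K)).Nonempty :=
    Finset.univ_nonempty_iff.mpr ⟨⟨0, hK⟩⟩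
  set W : ℕ → ℝ := fun t => ∑ a', Real.exp (η * S t a') with hWdef
  have hWpos : ∀ t, 0 < W t := fun t =>
    Finset.sum_pos (fun a' _ => Real.exp_pos _) hne
  have hPe : ∀ t a', Real.exp (η * S t a') = W t * P t a' := by
    intro t a'
    rw [hP]
    field_simp [hWdef]
    rfl
  have hPsum1 : ∀ t, ∑ a', P t a' = 1 := by
    intro t
    simp only [hP]
    rw [← Finset.sum_div, div_self (hWpos t).ne']
  have key : ∀ t,
      W (t + 1) ≤ W t * Real.exp (η * ∑ a', P t a' * Rhat t a'
        + η ^ 2 * ∑ a', P t a' * (Rhat t a') ^ 2) := by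
    intro t
    have hS1 : ∀ a', η * S (t + 1) a' = η * S t a' + η * Rhat t a' := by
      intro a'
      rw [hS, hS, Finset.sum_range_succ]
      ring
    have step1 : W (t + 1) ≤
        ∑ a', Real.exp (η * S t a') * (1 + η * Rhat t a' + (η * Rhat t a') ^ 2) := by
      apply Finset.sum_le_sum
      intro a' _
      rw [hS1 a', Real.exp_add]
      exact mul_le_mul_of_nonneg_left (exp_le_one_add_add_sq (hR t a')) (Real.exp_pos _).le
    have step2 : ∑ a', Real.exp (η * S t a') * (1 + η * Rhat t a' + (η * Rhat t a') ^ 2)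
        = W t * (1 + (η * ∑ a', P t a' * Rhat t a'
            + η ^ 2 * ∑ a', P t a' * (Rhat t a') ^ 2)) := by
      have : ∀ a' : Fin K, Real.exp (η * S t a') * (1 + η * Rhat t a' + (η * Rhat t a') ^ 2)
          = W t * (P t a' + η * (P t a' * Rhat t a') + η ^ 2 * (P t a' * (Rhat t a') ^ 2)) := by
        intro a'
        rw [hPe t a']
        ring
      rw [Finset.sum_congr rfl (fun a' _ => this a')]
      rw [← Finset.mul_sum, Finset.sum_add_distrib, Finset.sum_add_distrib,
        ← Finset.mul_sum, ← Finset.mul_sum, hPsum1 t]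
      ring
    have step3 : 1 + (η * ∑ a', P t a' * Rhat t a' + η ^ 2 * ∑ a', P t a' * (Rhat t a') ^ 2)
        ≤ Real.exp (η * ∑ a', P t a' * Rhat t a' + η ^ 2 * ∑ a', P t a' * (Rhat t a') ^ 2) := by
      linarith [Real.add_one_le_exp (η * ∑ a', P t a' * Rhat t a'
        + η ^ 2 * ∑ a', P t a' * (Rhat t a') ^ 2)]
    calc W (t + 1) ≤ W t * (1 + (η * ∑ a', P t a' * Rhat t a'
          + η ^ 2 * ∑ a', P t a' * (Rhat t a') ^ 2)) := step1.trans_eq step2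
      _ ≤ _ := mul_le_mul_of_nonneg_left step3 (hWpos t).le
  have hbound : ∀ t, W t ≤ K * Real.exp (η * ∑ s ∈ Finset.range t, ∑ a', P s a' * Rhat s a'
      + η ^ 2 * ∑ s ∈ Finset.range t, ∑ a', P s a' * (Rhat s a') ^ 2) := by
    intro t
    induction t with
    | zero =>
      have : W 0 = K := by
        simp only [hWdef]
        have : ∀ a' : Fin K, Real.exp (η * S 0 a') = 1 := by
          intro a'
          rw [hS]
          simp
        rw [Finset.sum_congr rfl (fun a' _ => this a')]
        simp
      simp [this]
    | succ t ih =>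
      calc W (t + 1) ≤ W t * Real.exp (η * ∑ a', P t a' * Rhat t a'
            + η ^ 2 * ∑ a', P t a' * (Rhat t a') ^ 2) := key t
        _ ≤ (K * Real.exp (η * ∑ s ∈ Finset.range t, ∑ a', P s a' * Rhat s a'
            + η ^ 2 * ∑ s ∈ Finset.range t, ∑ a', P s a' * (Rhat s a') ^ 2))
            * Real.exp (η * ∑ a', P t a' * Rhat t a'
            + η ^ 2 * ∑ a', P t a' * (Rhat t a') ^ 2) :=
            mul_le_mul_of_nonneg_right ih (Real.exp_pos _).le
        _ = _ := by
            rw [mul_assoc, ← Real.exp_add, Finset.sum_range_succ, Finset.sum_range_succ]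
            ring_nf
  set A : ℝ := ∑ t ∈ Finset.range T, ∑ a', P t a' * Rhat t a' with hA
  set B : ℝ := ∑ t ∈ Finset.range T, ∑ a', P t a' * (Rhat t a') ^ 2 with hB
  have hsingle : Real.exp (η * S T a) ≤ W T :=
    Finset.single_le_sum (f := fun a' => Real.exp (η * S T a'))
      (fun a' _ => (Real.exp_pos _).le) (Finset.mem_univ a)
  have hfin : Real.exp (η * S T a) ≤ K * Real.exp (η * A + η ^ 2 * B) :=
    hsingle.trans (hbound T)
  have hKpos : (0:ℝ) < K := by exact_mod_cast hK
  have hlog : η * S T a ≤ Real.log K + (η * A + η ^ 2 * B) := by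
    have h1 : η * S T a ≤ Real.log (K * Real.exp (η * A + η ^ 2 * B)) := by
      rw [Real.le_log_iff_exp_le (by positivity)]
      exact hfin
    rwa [Real.log_mul hKpos.ne' (Real.exp_pos _).ne', Real.log_exp] at h1
  have h2 : S T a - A - η * B ≤ Real.log K / η := by
    rw [le_div_iff₀ hη]
    nlinarith [hlog]
  linarith
end

section
/- Elliptical potential lemma: let V₀ = λI_d with λ > 0 and V_t = V_{t−1} + a_t a_tᵀ for vectors a_t ∈ ℝ^d. Then ∑_{t=1}^{T} min(1, ‖a_t‖²_{V_{t−1}^{-1}}) ≤ 2 log(det(V_T)/det(V₀)), where ‖a‖²_M = aᵀ M a. -/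
open Finset Matrix

lemma EP.posSemidef_vecMulVec (d : ℕ) (a : Fin d → ℝ) :
    (Matrix.vecMulVec a a).PosSemidef := by
  rw [Matrix.posSemidef_iff_dotProduct_mulVec]
  constructor
  · ext i j
    simp [Matrix.vecMulVec_apply, Matrix.conjTranspose_apply, mul_comm]
  · intro x
    have h : (Matrix.vecMulVec a a) *ᵥ x = (a ⬝ᵥ x) • a := by
      ext i
      simp [Matrix.mulVec, Matrix.vecMulVec_apply, dotProduct, Finset.mul_sum,
        mul_comm, mul_left_comm]
    rw [h]
    simp only [star_trivial, dotProduct_smul, smul_eq_mul]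
    rw [show x ⬝ᵥ a = a ⬝ᵥ x from dotProduct_comm x a]
    exact mul_self_nonneg _

lemma EP.min_le_two_log (x : ℝ) (hx : 0 ≤ x) :
    min 1 x ≤ 2 * Real.log (1 + x) := by
  have h1x : (0:ℝ) < 1 + x := by linarith
  have hlog : x / (1 + x) ≤ Real.log (1 + x) := by
    have h := Real.log_le_sub_one_of_pos (show (0:ℝ) < (1+x)⁻¹ by positivity)
    rw [Real.log_inv] at h
    have hx' : x / (1+x) = 1 - (1+x)⁻¹ := by field_simp; ring
    rw [hx']
    linarith
  have key : min 1 x ≤ 2 * (x / (1 + x)) := by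
    rcases le_total x 1 with h | h
    · rw [min_eq_right h, mul_div_assoc', le_div_iff₀ h1x]
      nlinarith
    · rw [min_eq_left h, mul_div_assoc', le_div_iff₀ h1x]
      linarith
  linarith

/-- Elliptical potential lemma. -/
theorem elliptical_potential (d T : ℕ) (lam : ℝ) (hlam : 0 < lam)
    (a : ℕ → Fin d → ℝ) (V : ℕ → Matrix (Fin d) (Fin d) ℝ)
    (hV : ∀ t, V t = lam • (1 : Matrix (Fin d) (Fin d) ℝ) +
      ∑ s ∈ Finset.range t, Matrix.vecMulVec (a s) (a s)) :
    ∑ t ∈ Finset.range T, min 1 (dotProduct (a t) ((V t)⁻¹.mulVec (a t)))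
      ≤ 2 * Real.log ((V T).det / (V 0).det) := by
  -- positive definiteness of each V t
  have hpos : ∀ t, (V t).PosDef := by
    intro t
    rw [hV t]
    have h1 : (lam • (1 : Matrix (Fin d) (Fin d) ℝ)).PosDef := by
      have : lam • (1 : Matrix (Fin d) (Fin d) ℝ) = Matrix.diagonal (fun _ => lam) := by
        ext i j
        by_cases h : i = j <;> simp [Matrix.one_apply, Matrix.diagonal, h]
      rw [this]
      exact Matrix.PosDef.diagonal fun _ => hlam
    have h2 : (∑ s ∈ Finset.range t, Matrix.vecMulVec (a s) (a s)).PosSemidef := by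
      induction t with
      | zero => simpa using Matrix.PosSemidef.zero
      | succ n ih =>
        rw [Finset.sum_range_succ]
        exact ih.add (EP.posSemidef_vecMulVec d (a n))
    exact h1.add_posSemidef h2
  set x : ℕ → ℝ := fun t => dotProduct (a t) ((V t)⁻¹.mulVec (a t)) with hxdef
  have hxnonneg : ∀ t, 0 ≤ x t := by
    intro t
    have := (Matrix.posSemidef_iff_dotProduct_mulVec.mp (hpos t).inv.posSemidef).2 (a t)
    simpa using this
  -- determinant recurrence
  have hdet : ∀ t, (V (t+1)).det = (V t).det * (1 + x t) := by
    intro t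
    have hsym : ∀ i j, (V t)⁻¹ i j = (V t)⁻¹ j i := fun i j => by
      simpa using ((hpos t).inv.isHermitian.apply j i)
    have hstep : V (t+1) = V t + Matrix.replicateCol Unit (a t) * Matrix.replicateRow Unit (a t) := by
      rw [hV (t+1), hV t, Finset.sum_range_succ, ← Matrix.vecMulVec_eq, add_assoc]
    have hunit : IsUnit (V t).det := (hpos t).det_pos.ne'.isUnit
    rw [hstep, Matrix.det_add_replicateCol_mul_replicateRow hunit]
    congr 1
    rw [Matrix.det_unique]
    simp only [Matrix.add_apply, Matrix.one_apply_eq, Matrix.mul_apply, Matrix.replicateRow_apply,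
      Matrix.replicateCol_apply, hxdef, dotProduct, Matrix.mulVec, Finset.sum_mul,
      Finset.mul_sum]
    congr 1
    refine Finset.sum_congr rfl fun i _ => ?_
    refine Finset.sum_congr rfl fun j _ => ?_
    rw [hsym i j]
    ring
  have hdetpos : ∀ t, 0 < (V t).det := fun t => (hpos t).det_pos
  have hlogstep : ∀ t, Real.log (1 + x t) = Real.log (V (t+1)).det - Real.log (V t).det := by
    intro t
    rw [hdet t, Real.log_mul (hdetpos t).ne' (by linarith [hxnonneg t] : (0:ℝ) < 1 + x t).ne']
    ring
  calc ∑ t ∈ Finset.range T, min 1 (x t)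
      ≤ ∑ t ∈ Finset.range T, 2 * Real.log (1 + x t) :=
        Finset.sum_le_sum fun t _ => EP.min_le_two_log (x t) (hxnonneg t)
    _ = 2 * ∑ t ∈ Finset.range T, (Real.log (V (t+1)).det - Real.log (V t).det) := by
        rw [Finset.mul_sum]
        exact Finset.sum_congr rfl fun t _ => by rw [hlogstep t]
    _ = 2 * (Real.log (V T).det - Real.log (V 0).det) := by
        rw [Finset.sum_range_sub (fun t => Real.log (V t).det)]
    _ = 2 * Real.log ((V T).det / (V 0).det) := by
        rw [Real.log_div (hdetpos T).ne' (hdetpos 0).ne']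
end
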